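/- In any two-terminal series-parallel graph G with source s and sink t, for any assignment of nonnegative edge costs (c_e), there exist nonnegative edge tolls (τ_e) such that every s-t path is a shortest s-t path under edge costs (c_e + τ_e), and the minimum of τ(P) over all s-t paths P equals 0. -/
import Mathlib


/-- Two-terminal series-parallel graphs, given by their binary decomposition tree. -/
inductive SPG : Type
  | edge : SPG
  | series : SPG → SPG → SPG
  | parallel : SPG → SPG → SPG

namespace SPG

/-- The edge set of a series-parallel graph (the leaves of the decomposition tree). -/
def E : SPG → Type
  | .edge => Unit
  | .series a b => a.E ⊕ b.E
  | .parallel a b => a.E ⊕ b.E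

/-- The `s`-`t` paths of a series-parallel graph. -/
def Path : SPG → Type
  | .edge => Unit
  | .series a b => a.Path × b.Path
  | .parallel a b => a.Path ⊕ b.Path

/-- The cost `c(P) = Σ_{e ∈ P} c_e` of a path under edge costs `c`. -/
def pathCost : (G : SPG) → (G.E → ℝ) → G.Path → ℝ
  | .edge, c, _ => c ()
  | .series a b, c, P => a.pathCost (c ∘ Sum.inl) P.1 + b.pathCost (c ∘ Sum.inr) P.2
  | .parallel a _, c, .inl P => a.pathCost (c ∘ Sum.inl) P
  | .parallel _ b, c, .inr P => b.pathCost (c ∘ Sum.inr) P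

/-- The minimum of `c(P)` over all `s`-`t` paths `P` of `G`. -/
def minPathCost : (G : SPG) → (G.E → ℝ) → ℝ
  | .edge, c => c ()
  | .series a b, c => a.minPathCost (c ∘ Sum.inl) + b.minPathCost (c ∘ Sum.inr)
  | .parallel a b, c => min (a.minPathCost (c ∘ Sum.inl)) (b.minPathCost (c ∘ Sum.inr))

/-- `e` is an edge leaving the source terminal of `G`. -/
def isSourceEdge : (G : SPG) → G.E → Prop
  | .edge, _ => True
  | .series a _, e => match e with
      | .inl e => a.isSourceEdge e
      | .inr _ => False
  | .parallel a b, e => match e with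
      | .inl e => a.isSourceEdge e
      | .inr e => b.isSourceEdge e

/-- Canonical tolls: for every subgraph `H` of the decomposition tree and every edge
`e` leaving the source terminal `s_H` of `H`, `α_e ≥ min_{P ∈ 𝒫(H)} α(P)`. -/
def Canonical : (G : SPG) → (G.E → ℝ) → Prop
  | .edge, _ => True
  | .series a b, τ =>
      (∀ e, a.isSourceEdge e →
        a.minPathCost (τ ∘ Sum.inl) + b.minPathCost (τ ∘ Sum.inr) ≤ τ (Sum.inl e)) ∧
      a.Canonical (τ ∘ Sum.inl) ∧ b.Canonical (τ ∘ Sum.inr)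
  | .parallel a b, τ =>
      (∀ e, a.isSourceEdge e →
        min (a.minPathCost (τ ∘ Sum.inl)) (b.minPathCost (τ ∘ Sum.inr)) ≤ τ (Sum.inl e)) ∧
      (∀ e, b.isSourceEdge e →
        min (a.minPathCost (τ ∘ Sum.inl)) (b.minPathCost (τ ∘ Sum.inr)) ≤ τ (Sum.inr e)) ∧
      a.Canonical (τ ∘ Sum.inl) ∧ b.Canonical (τ ∘ Sum.inr)

end SPG

namespace SPG

/-- Tolls adding a uniform amount `δ` to every path. -/
def shiftTolls : (G : SPG) → ℝ → (G.E → ℝ)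
  | .edge, δ => fun _ => δ
  | .series a b, δ => Sum.elim (shiftTolls a δ) (shiftTolls b 0)
  | .parallel a b, δ => Sum.elim (shiftTolls a δ) (shiftTolls b δ)

lemma shiftTolls_nonneg : ∀ (G : SPG) (δ : ℝ), 0 ≤ δ → ∀ e, 0 ≤ G.shiftTolls δ e
  | .edge, δ, hδ, _ => hδ
  | .series a b, δ, hδ, .inl e => shiftTolls_nonneg a δ hδ e
  | .series a b, δ, hδ, .inr e => shiftTolls_nonneg b 0 le_rfl e
  | .parallel a b, δ, hδ, .inl e => shiftTolls_nonneg a δ hδ e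
  | .parallel a b, δ, hδ, .inr e => shiftTolls_nonneg b δ hδ e

lemma pathCost_shiftTolls : ∀ (G : SPG) (δ : ℝ) (P : G.Path),
    G.pathCost (G.shiftTolls δ) P = δ
  | .edge, δ, _ => rfl
  | .series a b, δ, P => by
      show a.pathCost _ P.1 + b.pathCost _ P.2 = δ
      rw [show (a.series b).shiftTolls δ ∘ Sum.inl = a.shiftTolls δ from rfl,
        show (a.series b).shiftTolls δ ∘ Sum.inr = b.shiftTolls 0 from rfl,
        pathCost_shiftTolls a δ P.1, pathCost_shiftTolls b 0 P.2, add_zero]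
  | .parallel a b, δ, .inl P => pathCost_shiftTolls a δ P
  | .parallel a b, δ, .inr P => pathCost_shiftTolls b δ P

lemma pathCost_add : ∀ (G : SPG) (f g : G.E → ℝ) (P : G.Path),
    G.pathCost (fun e => f e + g e) P = G.pathCost f P + G.pathCost g P
  | .edge, f, g, _ => rfl
  | .series a b, f, g, P => by
      show a.pathCost _ P.1 + b.pathCost _ P.2 = _
      rw [show ((fun e => f e + g e) ∘ Sum.inl) = fun e => (f ∘ Sum.inl) e + (g ∘ Sum.inl) e from rfl,
        show ((fun e => f e + g e) ∘ Sum.inr) = fun e => (f ∘ Sum.inr) e + (g ∘ Sum.inr) e from rfl,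
        pathCost_add a, pathCost_add b]
      show _ = (a.pathCost _ P.1 + b.pathCost _ P.2) + (a.pathCost _ P.1 + b.pathCost _ P.2)
      ring
  | .parallel a b, f, g, .inl P => pathCost_add a (f ∘ Sum.inl) (g ∘ Sum.inl) P
  | .parallel a b, f, g, .inr P => pathCost_add b (f ∘ Sum.inr) (g ∘ Sum.inr) P

end SPG

/-- Claim 4.1: in any two-terminal series-parallel graph with nonnegative edge costs
`c`, there exist nonnegative edge tolls `τ` such that every `s`-`t` path is a
shortest `s`-`t` path under edge costs `c + τ` (i.e. all path costs are equal), and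
the minimum of `τ(P)` over `s`-`t` paths `P` is `0` (some path has zero toll, and
all tolls are nonnegative). -/
theorem spg_equalizing_tolls (G : SPG) (c : G.E → ℝ) (hc : ∀ e, 0 ≤ c e) :
    ∃ τ : G.E → ℝ, (∀ e, 0 ≤ τ e) ∧
      (∀ P Q : G.Path,
        G.pathCost (fun e => c e + τ e) P = G.pathCost (fun e => c e + τ e) Q) ∧
      (∃ P : G.Path, G.pathCost τ P = 0) := by
  induction G with
  | edge => exact ⟨fun _ => 0, fun _ => le_rfl, fun _ _ => rfl, ⟨(), rfl⟩⟩
  | series a b iha ihb =>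
    obtain ⟨τa, h1a, h2a, Pa, h3a⟩ := iha (c ∘ Sum.inl) (fun e => hc _)
    obtain ⟨τb, h1b, h2b, Pb, h3b⟩ := ihb (c ∘ Sum.inr) (fun e => hc _)
    refine ⟨Sum.elim τa τb, ?_, ?_, ⟨(Pa, Pb), ?_⟩⟩
    · rintro (e | e)
      exacts [h1a e, h1b e]
    · intro P Q
      show a.pathCost _ P.1 + b.pathCost _ P.2 = a.pathCost _ Q.1 + b.pathCost _ Q.2
      rw [show ((fun e => c e + Sum.elim τa τb e) ∘ Sum.inl)
            = fun e => (c ∘ Sum.inl) e + τa e from rfl,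
          show ((fun e => c e + Sum.elim τa τb e) ∘ Sum.inr)
            = fun e => (c ∘ Sum.inr) e + τb e from rfl,
          h2a P.1 Q.1, h2b P.2 Q.2]
    · show a.pathCost (Sum.elim τa τb ∘ Sum.inl) Pa
          + b.pathCost (Sum.elim τa τb ∘ Sum.inr) Pb = 0
      rw [show (Sum.elim τa τb ∘ Sum.inl) = τa from rfl,
          show (Sum.elim τa τb ∘ Sum.inr) = τb from rfl, h3a, h3b, add_zero]
  | parallel a b iha ihb =>
    obtain ⟨τa, h1a, h2a, Pa, h3a⟩ := iha (c ∘ Sum.inl) (fun e => hc _)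
    obtain ⟨τb, h1b, h2b, Pb, h3b⟩ := ihb (c ∘ Sum.inr) (fun e => hc _)
    set Ca := a.pathCost (fun e => (c ∘ Sum.inl) e + τa e) Pa with hCa
    set Cb := b.pathCost (fun e => (c ∘ Sum.inr) e + τb e) Pb with hCb
    rcases le_total Ca Cb with hle | hle
    · refine ⟨Sum.elim (fun e => τa e + a.shiftTolls (Cb - Ca) e) τb, ?_, ?_, ⟨Sum.inr Pb, ?_⟩⟩
      · rintro (e | e)
        · exact add_nonneg (h1a e) (SPG.shiftTolls_nonneg a _ (by linarith) e)
        · exact h1b e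
      · have key : ∀ P : (a.parallel b).Path,
            (a.parallel b).pathCost
              (fun e => c e + Sum.elim (fun e => τa e + a.shiftTolls (Cb - Ca) e) τb e) P = Cb := by
          rintro (P | P)
          · show a.pathCost (fun e => (c ∘ Sum.inl) e
                + (τa e + a.shiftTolls (Cb - Ca) e)) P = Cb
            rw [show (fun e => (c ∘ Sum.inl) e + (τa e + a.shiftTolls (Cb - Ca) e))
                = fun e => ((fun e => (c ∘ Sum.inl) e + τa e) e + a.shiftTolls (Cb - Ca) e)
                from funext fun e => (add_assoc _ _ _).symm,
              SPG.pathCost_add, SPG.pathCost_shiftTolls, h2a P Pa, ← hCa]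
            ring
          · show b.pathCost (fun e => (c ∘ Sum.inr) e + τb e) P = Cb
            rw [h2b P Pb]
        intro P Q
        rw [key P, key Q]
      · show b.pathCost τb Pb = 0
        exact h3b
    · refine ⟨Sum.elim τa (fun e => τb e + b.shiftTolls (Ca - Cb) e), ?_, ?_, ⟨Sum.inl Pa, ?_⟩⟩
      · rintro (e | e)
        · exact h1a e
        · exact add_nonneg (h1b e) (SPG.shiftTolls_nonneg b _ (by linarith) e)
      · have key : ∀ P : (a.parallel b).Path,
            (a.parallel b).pathCost
              (fun e => c e + Sum.elim τa (fun e => τb e + b.shiftTolls (Ca - Cb) e) e) P = Ca := by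
          rintro (P | P)
          · show a.pathCost (fun e => (c ∘ Sum.inl) e + τa e) P = Ca
            rw [h2a P Pa]
          · show b.pathCost (fun e => (c ∘ Sum.inr) e
                + (τb e + b.shiftTolls (Ca - Cb) e)) P = Ca
            rw [show (fun e => (c ∘ Sum.inr) e + (τb e + b.shiftTolls (Ca - Cb) e))
                = fun e => ((fun e => (c ∘ Sum.inr) e + τb e) e + b.shiftTolls (Ca - Cb) e)
                from funext fun e => (add_assoc _ _ _).symm,
              SPG.pathCost_add, SPG.pathCost_shiftTolls, h2b P Pb, ← hCb]
            ring
        intro P Q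
        rw [key P, key Q]
      · show a.pathCost τa Pa = 0
        exact h3a
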